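/- Consider a Galton–Watson branching process where each individual has a Binomial(m, p) number of offspring with mean mp ≥ 1. Then for every k > 0, the probability that the process survives to generation k is at least 1/(k+1). -/

import Mathlib

open MeasureTheory ProbabilityTheory
open scoped ENNReal NNReal

lemma agresti_key {p s : ℝ} {m : ℕ} (hp0 : 0 ≤ p) (hp1 : p ≤ 1) (hs0 : 0 ≤ s) (hs1 : s ≤ 1)
    (hmean : 1 ≤ (m : ℝ) * p) : (p * s + (1 - p)) ^ m ≤ 1 / (2 - s) := by
  set t : ℝ := 1 - s with ht
  have ht0 : 0 ≤ t := by simp [ht]; linarith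
  have ht1 : t ≤ 1 := by simp [ht]; linarith
  have hpt0 : 0 ≤ p * t := mul_nonneg hp0 ht0
  have hpt1 : p * t ≤ 1 := mul_le_one₀ hp1 ht0 ht1
  have h1 : p * s + (1 - p) = 1 - p * t := by rw [ht]; ring
  have e1 : 1 - p * t ≤ Real.exp (-(p * t)) := by
    have := Real.add_one_le_exp (-(p * t)); linarith
  have e2 : (1 - p * t) ^ m ≤ Real.exp (-(p * t)) ^ m :=
    pow_le_pow_left₀ (by linarith) e1 m
  have e3 : Real.exp (-(p * t)) ^ m = Real.exp (-((m : ℝ) * p * t)) := by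
    rw [← Real.exp_nat_mul]; ring_nf
  have e4 : Real.exp (-((m : ℝ) * p * t)) ≤ Real.exp (-t) := by
    apply Real.exp_le_exp.2; nlinarith
  have e5 : Real.exp (-t) ≤ 1 / (1 + t) := by
    rw [Real.exp_neg]
    have h2 : 1 + t ≤ Real.exp t := by have := Real.add_one_le_exp t; linarith
    rw [inv_eq_one_div]
    exact one_div_le_one_div_of_le (by linarith) h2
  have h3 : (2 : ℝ) - s = 1 + t := by rw [ht]; ring
  rw [h1, h3]
  exact e2.trans (e3 ▸ e4.trans e5)

lemma agresti_iter {p : ℝ} {m : ℕ} (hp0 : 0 ≤ p) (hp1 : p ≤ 1)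
    (hmean : 1 ≤ (m : ℝ) * p) :
    ∀ n : ℕ, 0 ≤ (fun s : ℝ => (p * s + (1 - p)) ^ m)^[n] 0 ∧
      (fun s : ℝ => (p * s + (1 - p)) ^ m)^[n] 0 ≤ 1 - 1 / ((n : ℝ) + 1) := by
  intro n
  induction n with
  | zero => simp
  | succ n ih =>
    obtain ⟨h0, h1⟩ := ih
    rw [Function.iterate_succ_apply']
    set s := (fun s : ℝ => (p * s + (1 - p)) ^ m)^[n] 0 with hs
    have hn1 : (0:ℝ) < (n : ℝ) + 1 := by positivity
    have hs1 : s ≤ 1 := by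
      have : 1 / ((n:ℝ) + 1) > 0 := by positivity
      linarith
    constructor
    · apply pow_nonneg; nlinarith
    · have hk := agresti_key hp0 hp1 h0 hs1 hmean
      have h2 : 1 / (2 - s) ≤ 1 / (1 + 1 / ((n:ℝ)+1)) := by
        apply one_div_le_one_div_of_le
        · positivity
        · linarith
      have h3 : 1 / (1 + 1 / ((n:ℝ)+1)) = 1 - 1 / ((n:ℝ) + 1 + 1) := by
        have hN : (0:ℝ) < (n:ℝ) + 1 := hn1
        have hD : (0:ℝ) < (n:ℝ) + 2 := by linarith
        rw [eq_sub_iff_add_eq, div_add_div _ _ (by positivity) (by linarith), div_eq_one_iff_eq (by positivity)]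
        field_simp
      push_cast
      calc (p * s + (1 - p)) ^ m ≤ 1 / (2 - s) := hk
        _ ≤ 1 / (1 + 1/((n:ℝ)+1)) := h2
        _ = 1 - 1 / ((n:ℝ) + 1 + 1) := h3


lemma gw_Zmeas {Ω : Type*} [MeasurableSpace Ω]
    (ξ : ℕ × ℕ → Ω → ℕ) (hmeas : ∀ r, Measurable (ξ r))
    (Z : ℕ → Ω → ℕ) (hZ0 : ∀ ω, Z 0 ω = 1)
    (hZrec : ∀ n ω, Z (n + 1) ω = ∑ j ∈ Finset.range (Z n ω), ξ (n, j) ω) :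
    ∀ n, Measurable[⨆ r ∈ {r : ℕ × ℕ | r.1 < n}, MeasurableSpace.comap (ξ r) inferInstance] (Z n) := by
  intro n
  induction n with
  | zero =>
    have : Z 0 = fun _ => 1 := funext hZ0
    rw [this]; exact measurable_const
  | succ n ih =>
    set M' := ⨆ r ∈ {r : ℕ × ℕ | r.1 < n + 1}, MeasurableSpace.comap (ξ r) inferInstance with hM'
    have hle : (⨆ r ∈ {r : ℕ × ℕ | r.1 < n}, MeasurableSpace.comap (ξ r) inferInstance) ≤ M' := by
      apply biSup_mono; intro r hr; exact Nat.lt_succ_of_lt hr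
    have hZn : Measurable[M'] (Z n) := ih.mono hle le_rfl
    apply measurable_to_countable'
    intro c
    have hset : Z (n + 1) ⁻¹' {c} =
        ⋃ z : ℕ, (Z n ⁻¹' {z}) ∩ {ω | ∑ j ∈ Finset.range z, ξ (n, j) ω = c} := by
      ext ω
      simp only [Set.mem_preimage, Set.mem_singleton_iff, Set.mem_iUnion, Set.mem_inter_iff,
        Set.mem_setOf_eq, hZrec]
      exact ⟨fun h => ⟨Z n ω, rfl, h⟩, fun ⟨z, hz, h⟩ => by rw [hz]; exact h⟩
    rw [hset]
    apply MeasurableSet.iUnion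
    intro z
    apply MeasurableSet.inter
    · exact hZn (measurableSet_singleton z)
    · have hsum : Measurable[M'] (fun ω => ∑ j ∈ Finset.range z, ξ (n, j) ω) := by
        apply Finset.measurable_sum
        intro j _
        exact Measurable.of_comap_le (le_biSup (f := fun r => MeasurableSpace.comap (ξ r) inferInstance)
          (by exact Nat.lt_succ_self n : ((n, j) : ℕ × ℕ).1 < n + 1))
      exact hsum (measurableSet_singleton c)

lemma gw_peel {Ω : Type*} [mΩ : MeasurableSpace Ω] (μ : Measure Ω) [IsProbabilityMeasure μ]
    (ξ : ℕ × ℕ → Ω → ℕ) (hmeas : ∀ r, Measurable (ξ r))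
    (hind : iIndepFun ξ μ)
    (n : ℕ) (σ : ℝ≥0∞) :
    ∀ (z : ℕ) (f : Ω → ℝ≥0∞),
      Measurable[⨆ r ∈ {r : ℕ × ℕ | r.1 < n}, MeasurableSpace.comap (ξ r) inferInstance] f →
      ∫⁻ ω, f ω * ∏ j ∈ Finset.range z, σ ^ ξ (n, j) ω ∂μ =
        (∫⁻ ω, f ω ∂μ) * ∏ j ∈ Finset.range z, ∫⁻ ω, σ ^ ξ (n, j) ω ∂μ := by
  intro z
  induction z with
  | zero => intro f hf; simp
  | succ z ih =>
    intro f hf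
    set T : Set (ℕ × ℕ) := {r | r.1 < n ∨ (r.1 = n ∧ r.2 < z)} with hT
    set N : MeasurableSpace Ω := ⨆ r ∈ T, MeasurableSpace.comap (ξ r) inferInstance with hN
    have hNle : N ≤ mΩ := by
      apply iSup₂_le; intro r _; exact (hmeas r).comap_le
    have hMN : (⨆ r ∈ {r : ℕ × ℕ | r.1 < n}, MeasurableSpace.comap (ξ r) inferInstance) ≤ N := by
      apply biSup_mono; intro r hr; exact Or.inl hr
    have hcomap_mem : ∀ j < z, MeasurableSpace.comap (ξ (n, j)) inferInstance ≤ N := by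
      intro j hj
      exact le_biSup (f := fun r => MeasurableSpace.comap (ξ r) inferInstance)
        (show ((n, j) : ℕ × ℕ) ∈ T from Or.inr ⟨rfl, hj⟩)
    have hξmeasN : ∀ j < z, Measurable[N] (fun ω => σ ^ ξ (n, j) ω) := by
      intro j hj
      exact (measurable_from_top (f := fun k : ℕ => σ ^ k)).comp
        ((Measurable.of_comap_le le_rfl).mono (hcomap_mem j hj) le_rfl)
    have hF : Measurable[N] (fun ω => f ω * ∏ j ∈ Finset.range z, σ ^ ξ (n, j) ω) := by
      apply Measurable.mul (hf.mono hMN le_rfl)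
      apply Finset.measurable_prod
      intro j hj
      exact hξmeasN j (Finset.mem_range.mp hj)
    have hG : Measurable[MeasurableSpace.comap (ξ (n, z)) inferInstance] (fun ω => σ ^ ξ (n, z) ω) :=
      (measurable_from_top (f := fun k : ℕ => σ ^ k)).comp (Measurable.of_comap_le le_rfl)
    have hindep : Indep N (MeasurableSpace.comap (ξ (n, z)) inferInstance) μ := by
      have h0 := indep_biSup_compl (fun r => (hmeas r).comap_le) hind.iIndep T
      refine indep_of_indep_of_le_right h0 ?_
      refine le_biSup (f := fun r => MeasurableSpace.comap (ξ r) inferInstance) ?_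
      simp [hT]
    have key := lintegral_mul_eq_lintegral_mul_lintegral_of_independent_measurableSpace
      hNle (hmeas (n, z)).comap_le hindep hF hG
    calc ∫⁻ ω, f ω * ∏ j ∈ Finset.range (z + 1), σ ^ ξ (n, j) ω ∂μ
        = ∫⁻ ω, (f ω * ∏ j ∈ Finset.range z, σ ^ ξ (n, j) ω) * σ ^ ξ (n, z) ω ∂μ := by
          simp_rw [Finset.prod_range_succ, mul_assoc]
      _ = (∫⁻ ω, f ω * ∏ j ∈ Finset.range z, σ ^ ξ (n, j) ω ∂μ) * ∫⁻ ω, σ ^ ξ (n, z) ω ∂μ := key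
      _ = ((∫⁻ ω, f ω ∂μ) * ∏ j ∈ Finset.range z, ∫⁻ ω, σ ^ ξ (n, j) ω ∂μ) *
            ∫⁻ ω, σ ^ ξ (n, z) ω ∂μ := by rw [ih f hf]
      _ = (∫⁻ ω, f ω ∂μ) * ∏ j ∈ Finset.range (z + 1), ∫⁻ ω, σ ^ ξ (n, j) ω ∂μ := by
          rw [Finset.prod_range_succ, mul_assoc]


lemma fin_last_sub_val {m : ℕ} (i : Fin (m + 1)) : ((Fin.last m - i : Fin (m + 1)) : ℕ) = m - i := by
  rw [Fin.sub_def]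
  have hi : (i : ℕ) < m + 1 := i.isLt
  simp only [Fin.val_last]
  have h1 : m + 1 - (i : ℕ) + m = (m + 1) + (m - i) := by omega
  rw [h1, Nat.add_mod_left, Nat.mod_eq_of_lt (by omega)]

lemma gw_offspring_lint {Ω : Type*} [mΩ : MeasurableSpace Ω] (μ : Measure Ω)
    (m : ℕ) (q : ℝ≥0) (hple : q ≤ 1)
    (X : Ω → ℕ) (hX : Measurable X)
    (hdist : Measure.map X μ = ((PMF.binomial q hple m).map Fin.val).toMeasure)
    (σ : ℝ≥0∞) :
    ∫⁻ ω, σ ^ X ω ∂μ = (q * σ + (1 - q)) ^ m := by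
  have h1 : ∫⁻ ω, σ ^ X ω ∂μ = ∫⁻ k, σ ^ k ∂(Measure.map X μ) :=
    (lintegral_map (f := fun k : ℕ => σ ^ k) measurable_from_top hX).symm
  rw [h1, hdist]
  have hmm := PMF.toMeasure_map (f := (Fin.val : Fin (m+1) → ℕ)) (PMF.binomial q hple m) (measurable_of_countable _)
  rw [← hmm,
    lintegral_map (f := fun k : ℕ => σ ^ k) measurable_from_top
      (measurable_of_countable (Fin.val)),
    lintegral_fintype]
  have h2 : ∀ i : Fin (m + 1), (PMF.binomial q hple m).toMeasure {i} =
      q ^ (i : ℕ) * (1 - q) ^ (m - (i : ℕ)) * (m.choose i : ℕ) := by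
    intro i
    rw [PMF.toMeasure_apply_singleton _ _ (measurableSet_singleton i),
      PMF.binomial_apply, Fin.val_last]
  simp_rw [h2]
  have h3 : ∀ i : Fin (m + 1), σ ^ (i : ℕ) * (q ^ (i : ℕ) * (1 - q) ^ (m - (i : ℕ)) *
      (m.choose i : ℕ)) = (q * σ) ^ (i : ℕ) * (1 - q) ^ (m - (i : ℕ)) * (m.choose i : ℕ) := by
    intro i; rw [mul_pow]; ring
  simp_rw [h3]
  rw [Fin.sum_univ_eq_sum_range
    (fun i => (q * σ) ^ i * (1 - q) ^ (m - i) * (m.choose i : ℕ)), add_pow]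

lemma gw_lint_pow {Ω : Type*} [mΩ : MeasurableSpace Ω] (μ : Measure Ω) [IsProbabilityMeasure μ]
    (W : Ω → ℕ) (hW : Measurable W) (τ : ℝ≥0∞) :
    ∫⁻ ω, τ ^ W ω ∂μ = ∑' z : ℕ, μ {ω | W ω = z} * τ ^ z := by
  have h1 : ∀ ω, τ ^ W ω =
      ∑' z : ℕ, Set.indicator {ω | W ω = z} (fun _ => τ ^ z) ω := by
    intro ω
    rw [tsum_eq_single (W ω)]
    · rw [Set.indicator_of_mem (by simp : ω ∈ {ω' | W ω' = W ω})]
    · intro z hz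
      rw [Set.indicator_of_notMem (by simpa using (Ne.symm hz))]
  have hms : ∀ z : ℕ, MeasurableSet {ω | W ω = z} := fun z => hW (measurableSet_singleton z)
  calc ∫⁻ ω, τ ^ W ω ∂μ
      = ∫⁻ ω, ∑' z : ℕ, Set.indicator {ω | W ω = z} (fun _ => τ ^ z) ω ∂μ := by
        congr 1; exact funext h1
    _ = ∑' z : ℕ, ∫⁻ ω, Set.indicator {ω | W ω = z} (fun _ => τ ^ z) ω ∂μ :=
        lintegral_tsum (fun z => ((measurable_const).indicator (hms z)).aemeasurable)
    _ = ∑' z : ℕ, μ {ω | W ω = z} * τ ^ z := by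
        congr 1; funext z
        rw [lintegral_indicator_const (hms z), mul_comm]

lemma gw_gen {Ω : Type*} [mΩ : MeasurableSpace Ω] (μ : Measure Ω) [IsProbabilityMeasure μ]
    (m : ℕ) (q : ℝ≥0) (hple : q ≤ 1)
    (ξ : ℕ × ℕ → Ω → ℕ) (hmeas : ∀ r, Measurable (ξ r))
    (hind : iIndepFun ξ μ)
    (hdist : ∀ r, Measure.map (ξ r) μ = ((PMF.binomial q hple m).map Fin.val).toMeasure)
    (Z : ℕ → Ω → ℕ) (hZ0 : ∀ ω, Z 0 ω = 1)
    (hZrec : ∀ n ω, Z (n + 1) ω = ∑ j ∈ Finset.range (Z n ω), ξ (n, j) ω) :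
    ∀ n : ℕ, ∀ σ : ℝ≥0∞, σ ≤ 1 →
      ∫⁻ ω, σ ^ Z n ω ∂μ = (fun s : ℝ≥0∞ => (q * s + (1 - q)) ^ m)^[n] σ := by
  have hZm : ∀ n, Measurable (Z n) := by
    intro n
    exact (gw_Zmeas ξ hmeas Z hZ0 hZrec n).mono
      (iSup₂_le fun r _ => (hmeas r).comap_le) le_rfl
  have hf1 : ∀ σ : ℝ≥0∞, σ ≤ 1 → (q * σ + (1 - q)) ^ m ≤ 1 := by
    intro σ hσ
    apply pow_le_one'
    calc q * σ + (1 - q) ≤ q * 1 + (1 - q) := by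
          exact add_le_add_left (mul_le_mul_right hσ (q : ℝ≥0∞)) _
      _ = 1 := by rw [mul_one, add_comm, tsub_add_cancel_of_le (ENNReal.coe_le_one_iff.mpr hple)]
  intro n
  induction n with
  | zero =>
    intro σ _
    have : ∀ ω, σ ^ Z 0 ω = σ := by intro ω; rw [hZ0, pow_one]
    simp only [this, Function.iterate_zero, id_eq]
    rw [lintegral_const, measure_univ, mul_one]
  | succ n ih =>
    intro σ hσ
    have hstep : ∫⁻ ω, σ ^ Z (n + 1) ω ∂μ =
        ∑' z : ℕ, μ {ω | Z n ω = z} * ((q * σ + (1 - q)) ^ m) ^ z := by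
      have h1 : ∀ ω, σ ^ Z (n + 1) ω = ∑' z : ℕ,
          Set.indicator {ω | Z n ω = z} (fun _ => (1 : ℝ≥0∞)) ω *
            ∏ j ∈ Finset.range z, σ ^ ξ (n, j) ω := by
        intro ω
        rw [tsum_eq_single (Z n ω)]
        · rw [Set.indicator_of_mem (by simp : ω ∈ {ω' | Z n ω' = Z n ω}), one_mul,
            hZrec, ← Finset.prod_pow_eq_pow_sum]
        · intro z hz
          rw [Set.indicator_of_notMem (by simpa using (Ne.symm hz)), zero_mul]
      have hms : ∀ z : ℕ, MeasurableSet {ω | Z n ω = z} :=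
        fun z => hZm n (measurableSet_singleton z)
      have hmeas_term : ∀ z : ℕ, Measurable (fun ω =>
          Set.indicator {ω | Z n ω = z} (fun _ => (1 : ℝ≥0∞)) ω *
            ∏ j ∈ Finset.range z, σ ^ ξ (n, j) ω) := by
        intro z
        apply Measurable.mul ((measurable_const).indicator (hms z))
        exact Finset.measurable_prod _ fun j _ =>
          (measurable_from_top (f := fun k : ℕ => σ ^ k)).comp (hmeas (n, j))
      calc ∫⁻ ω, σ ^ Z (n + 1) ω ∂μ
          = ∑' z : ℕ, ∫⁻ ω, Set.indicator {ω | Z n ω = z} (fun _ => (1 : ℝ≥0∞)) ω *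
              ∏ j ∈ Finset.range z, σ ^ ξ (n, j) ω ∂μ := by
            rw [show (fun ω => σ ^ Z (n+1) ω) = fun ω => ∑' z : ℕ,
              Set.indicator {ω | Z n ω = z} (fun _ => (1:ℝ≥0∞)) ω *
                ∏ j ∈ Finset.range z, σ ^ ξ (n, j) ω from funext h1]
            exact lintegral_tsum (fun z => (hmeas_term z).aemeasurable)
        _ = ∑' z : ℕ, μ {ω | Z n ω = z} * ((q * σ + (1 - q)) ^ m) ^ z := by
            congr 1; funext z
            have hind_meas : Measurable[⨆ r ∈ {r : ℕ × ℕ | r.1 < n},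
                MeasurableSpace.comap (ξ r) inferInstance]
                (Set.indicator {ω | Z n ω = z} (fun _ => (1 : ℝ≥0∞))) :=
              measurable_const.indicator
                (gw_Zmeas ξ hmeas Z hZ0 hZrec n (measurableSet_singleton z))
            rw [gw_peel μ ξ hmeas hind n σ z _ hind_meas]
            congr 1
            · exact lintegral_indicator_one (hms z)
            · rw [Finset.prod_congr rfl (fun j _ =>
                gw_offspring_lint μ m q hple (ξ (n, j)) (hmeas (n, j)) (hdist (n, j)) σ),
                Finset.prod_const, Finset.card_range]
    rw [hstep, ← gw_lint_pow μ (Z n) (hZm n), ih _ (hf1 σ hσ),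
      ← Function.iterate_succ_apply]

lemma gw_extinct {Ω : Type*} [mΩ : MeasurableSpace Ω] (μ : Measure Ω) [IsProbabilityMeasure μ]
    (m : ℕ) (q : ℝ≥0) (hple : q ≤ 1)
    (ξ : ℕ × ℕ → Ω → ℕ) (hmeas : ∀ r, Measurable (ξ r))
    (hind : iIndepFun ξ μ)
    (hdist : ∀ r, Measure.map (ξ r) μ = ((PMF.binomial q hple m).map Fin.val).toMeasure)
    (Z : ℕ → Ω → ℕ) (hZ0 : ∀ ω, Z 0 ω = 1)
    (hZrec : ∀ n ω, Z (n + 1) ω = ∑ j ∈ Finset.range (Z n ω), ξ (n, j) ω) (k : ℕ) :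
    μ {ω | Z k ω = 0} = (fun s : ℝ≥0∞ => (q * s + (1 - q)) ^ m)^[k] 0 := by
  have hZm : Measurable (Z k) :=
    (gw_Zmeas ξ hmeas Z hZ0 hZrec k).mono (iSup₂_le fun r _ => (hmeas r).comap_le) le_rfl
  have h := gw_gen μ m q hple ξ hmeas hind hdist Z hZ0 hZrec k 0 zero_le_one
  rw [gw_lint_pow μ (Z k) hZm 0] at h
  rw [← h, tsum_eq_single 0]
  · simp
  · intro z hz
    rw [zero_pow hz, mul_zero]

lemma gw_iter_ofReal {p : ℝ} (hp0 : 0 ≤ p) (hp1 : p ≤ 1) {m : ℕ} (hmean : 1 ≤ (m:ℝ) * p) :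
    ∀ n : ℕ, (fun s : ℝ≥0∞ => (ENNReal.ofReal p * s + (1 - ENNReal.ofReal p)) ^ m)^[n] 0 =
      ENNReal.ofReal ((fun x : ℝ => (p * x + (1 - p)) ^ m)^[n] 0) := by
  intro n
  induction n with
  | zero => simp
  | succ n ih =>
    rw [Function.iterate_succ_apply', Function.iterate_succ_apply', ih]
    set a : ℝ := (fun x : ℝ => (p * x + (1 - p)) ^ m)^[n] 0 with ha
    have ha0 : 0 ≤ a := (agresti_iter hp0 hp1 hmean n).1
    show (ENNReal.ofReal p * ENNReal.ofReal a + (1 - ENNReal.ofReal p)) ^ m =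
      ENNReal.ofReal ((p * a + (1 - p)) ^ m)
    rw [← ENNReal.ofReal_mul hp0,
      show (1 : ℝ≥0∞) - ENNReal.ofReal p = ENNReal.ofReal (1 - p) by
        rw [ENNReal.ofReal_sub 1 hp0, ENNReal.ofReal_one],
      ← ENNReal.ofReal_add (by positivity) (by linarith),
      ← ENNReal.ofReal_pow (by nlinarith)]

theorem stmt4 {Ω : Type*} [MeasurableSpace Ω] (μ : Measure Ω) [IsProbabilityMeasure μ]
    (m : ℕ) (p : ℝ) (hp0 : 0 ≤ p) (hple : ENNReal.ofReal p ≤ 1)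
    (hmean : 1 ≤ (m : ℝ) * p)
    (ξ : ℕ × ℕ → Ω → ℕ)
    (hind : iIndepFun ξ μ)
    (hdist : ∀ q, Measure.map (ξ q) μ =
      ((PMF.binomial (Real.toNNReal p) (ENNReal.coe_le_one_iff.mp hple) m).map Fin.val).toMeasure)
    (Z : ℕ → Ω → ℕ) (hZ0 : ∀ ω, Z 0 ω = 1)
    (hZrec : ∀ n ω, Z (n + 1) ω = ∑ j ∈ Finset.range (Z n ω), ξ (n, j) ω)
    (k : ℕ) (hk : 0 < k) :
    1 / ((k : ℝ) + 1) ≤ (μ {ω | 0 < Z k ω}).toReal := by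
  have hp1 : p ≤ 1 := ENNReal.ofReal_le_one.mp hple
  -- ξ is a.e. measurable
  have hAE : ∀ r, AEMeasurable (ξ r) μ := by
    intro r
    by_contra h
    have h0 := hdist r
    rw [Measure.map_of_not_aemeasurable h] at h0
    have h1 : ((PMF.binomial (Real.toNNReal p) (ENNReal.coe_le_one_iff.mp hple) m).map Fin.val).toMeasure Set.univ = 1 :=
      measure_univ
    rw [← h0] at h1
    simp at h1
  set ξ' : ℕ × ℕ → Ω → ℕ := fun r => (hAE r).mk (ξ r) with hξ'
  have hmeas' : ∀ r, Measurable (ξ' r) := fun r => (hAE r).measurable_mk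
  have hG : ∀ᵐ ω ∂μ, ∀ r, ξ r ω = ξ' r ω := ae_all_iff.2 fun r => (hAE r).ae_eq_mk
  have hdist' : ∀ r, Measure.map (ξ' r) μ =
      ((PMF.binomial (Real.toNNReal p) (ENNReal.coe_le_one_iff.mp hple) m).map Fin.val).toMeasure := by
    intro r
    rw [← Measure.map_congr ((hAE r).ae_eq_mk)]
    exact hdist r
  have hind' : iIndepFun ξ' μ := by
    rw [iIndepFun_iff_measure_inter_preimage_eq_mul]
    have h := iIndepFun_iff_measure_inter_preimage_eq_mul.mp hind
    intro S sets hsets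
    have e1 : μ (⋂ i ∈ S, ξ' i ⁻¹' sets i) = μ (⋂ i ∈ S, ξ i ⁻¹' sets i) := by
      apply measure_congr
      rw [Filter.eventuallyEq_set]
      filter_upwards [hG] with ω h'
      simp only [Set.mem_iInter, Set.mem_preimage]
      exact forall_congr' fun i => forall_congr' fun _ => by rw [h' i]
    have e2 : ∀ i, μ (ξ' i ⁻¹' sets i) = μ (ξ i ⁻¹' sets i) := by
      intro i
      apply measure_congr
      rw [Filter.eventuallyEq_set]
      filter_upwards [hG] with ω h'
      simp [h' i]
    rw [e1, Finset.prod_congr rfl fun i _ => e2 i]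
    exact h S hsets
  set Z' : ℕ → Ω → ℕ := fun n => Nat.rec (fun _ => 1)
    (fun n Zn ω => ∑ j ∈ Finset.range (Zn ω), ξ' (n, j) ω) n with hZ'
  have hZ'0 : ∀ ω, Z' 0 ω = 1 := fun _ => rfl
  have hZ'rec : ∀ n ω, Z' (n + 1) ω = ∑ j ∈ Finset.range (Z' n ω), ξ' (n, j) ω :=
    fun _ _ => rfl
  have hZeq : ∀ᵐ ω ∂μ, ∀ n, Z n ω = Z' n ω := by
    filter_upwards [hG] with ω h'
    intro n
    induction n with
    | zero => rw [hZ0, hZ'0]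
    | succ n ih =>
      rw [hZrec, hZ'rec, ih]
      exact Finset.sum_congr rfl fun j _ => h' (n, j)
  have hsurv : μ {ω | 0 < Z k ω} = μ {ω | 0 < Z' k ω} := by
    apply measure_congr
    rw [Filter.eventuallyEq_set]
    filter_upwards [hZeq] with ω h'
    simp [h' k]
  -- extinction probability
  set q : ℝ≥0 := Real.toNNReal p with hq
  set a : ℝ := (fun x : ℝ => (p * x + (1 - p)) ^ m)^[k] 0 with ha
  obtain ⟨ha0, ha1⟩ := agresti_iter hp0 hp1 hmean k
  have hext : μ {ω | Z' k ω = 0} = ENNReal.ofReal a := by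
    rw [gw_extinct μ m q (ENNReal.coe_le_one_iff.mp hple) ξ' hmeas' hind' hdist' Z' hZ'0 hZ'rec k]
    exact gw_iter_ofReal hp0 hp1 hmean k
  have hZ'm : Measurable (Z' k) :=
    (gw_Zmeas ξ' hmeas' Z' hZ'0 hZ'rec k).mono (iSup₂_le fun r _ => (hmeas' r).comap_le) le_rfl
  have hcompl : {ω | 0 < Z' k ω} = (Z' k ⁻¹' {0})ᶜ := by
    ext ω; simp [Nat.pos_iff_ne_zero]
  have hone : μ {ω | 0 < Z' k ω} = 1 - ENNReal.ofReal a := by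
    rw [hcompl, prob_compl_eq_one_sub (hZ'm (measurableSet_singleton 0)),
      show Z' k ⁻¹' {0} = {ω | Z' k ω = 0} from rfl, hext]
  have hbound : ENNReal.ofReal (1 / ((k:ℝ) + 1)) ≤ μ {ω | 0 < Z k ω} := by
    rw [hsurv, hone]
    have h1 : ENNReal.ofReal (1 / ((k:ℝ) + 1)) =
        1 - ENNReal.ofReal (1 - 1 / ((k:ℝ) + 1)) := by
      rw [show (1:ℝ≥0∞) = ENNReal.ofReal 1 from ENNReal.ofReal_one.symm,
        ← ENNReal.ofReal_sub 1 (by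
          have : 1 / ((k:ℝ) + 1) ≤ 1 := by
            rw [div_le_one (by positivity)]; simp
          linarith)]
      norm_num
    rw [h1]
    exact tsub_le_tsub_left (ENNReal.ofReal_le_ofReal ha1) 1
  have hfin : μ {ω | 0 < Z k ω} ≠ ⊤ := measure_ne_top μ _
  have := ENNReal.toReal_mono hfin hbound
  rwa [ENNReal.toReal_ofReal (by positivity)] at this
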